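/- Let K be a field, p, q, s, t ∈ K, and set A = ![![0, p], ![q, 0]] and B = ![![0, s], ![t, 0]] (2×2 matrices over K). Assume pq = k ≠ 0. Then there exists G ∈ SL(2, K) with G * A * G⁻¹ = B if and only if s * t = k and there exist x, y ∈ K such that x² − k·y² = p·s. -/

import Mathlib

/-- Two anti-diagonal 2×2 matrices with nonzero determinant data:
`A = !![0, p; q, 0]` and `B = !![0, s; t, 0]` with `p*q = k ≠ 0` are conjugate by an
element of `SL(2, K)` iff `s*t = k` and `x² - k y² = p s` is solvable in `K`. -/
theorem anti_diagonal_sl2_conjugacy {K : Type*} [Field K] (p q s t k : K)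
    (hpq : p * q = k) (hk : k ≠ 0) :
    (∃ G : Matrix.SpecialLinearGroup (Fin 2) K,
        (G : Matrix (Fin 2) (Fin 2) K) * !![0, p; q, 0] *
          ((G⁻¹ : Matrix.SpecialLinearGroup (Fin 2) K) : Matrix (Fin 2) (Fin 2) K)
          = !![0, s; t, 0]) ↔
      s * t = k ∧ ∃ x y : K, x ^ 2 - k * y ^ 2 = p * s := by
  have hp : p ≠ 0 := fun h => hk (by rw [← hpq, h, zero_mul])
  constructor
  · rintro ⟨G, hG⟩
    have hGA : (G : Matrix (Fin 2) (Fin 2) K) * !![0, p; q, 0]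
        = !![0, s; t, 0] * (G : Matrix (Fin 2) (Fin 2) K) := by
      have h := congrArg (· * (G : Matrix (Fin 2) (Fin 2) K)) hG
      simp only [Matrix.mul_assoc] at h
      rw [← Matrix.SpecialLinearGroup.coe_mul, inv_mul_cancel,
        Matrix.SpecialLinearGroup.coe_one, Matrix.mul_one] at h
      exact h
    set a := (G : Matrix (Fin 2) (Fin 2) K) 0 0 with ha
    set b := (G : Matrix (Fin 2) (Fin 2) K) 0 1 with hb
    set c := (G : Matrix (Fin 2) (Fin 2) K) 1 0 with hc
    set d := (G : Matrix (Fin 2) (Fin 2) K) 1 1 with hd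
    have hdet : a * d - b * c = 1 := by
      have := G.2
      rw [Matrix.det_fin_two] at this
      exact this
    have h00 := congrFun (congrFun hGA 0) 0
    have h01 := congrFun (congrFun hGA 0) 1
    have h10 := congrFun (congrFun hGA 1) 0
    have h11 := congrFun (congrFun hGA 1) 1
    simp [Matrix.mul_apply, Fin.sum_univ_two, ← ha, ← hb, ← hc, ← hd] at h00 h01 h10 h11
    -- h00 : b * q = s * c, h01 : a * p = s * d, h10 : d * q = t * a, h11 : c * p = t * b
    have e1 : a * d * (p * q) = a * d * (s * t) := by
      linear_combination d * q * h01 + s * d * h10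
    have e2 : b * c * (p * q) = b * c * (s * t) := by
      linear_combination c * p * h00 + s * c * h11
    refine ⟨by linear_combination hpq - e1 + e2 + (p * q - s * t) * hdet, a * p, b, ?_⟩
    linear_combination a * p * h01 + p * s * hdet - p * b * h00 + b ^ 2 * hpq
  · rintro ⟨hst, x, y, hxy⟩
    have hs : s ≠ 0 := fun h => hk (by rw [← hst, h, zero_mul])
    have hdet : Matrix.det !![x / p, y; y * q / s, x / s] = 1 := by
      rw [Matrix.det_fin_two_of]
      field_simp
      linear_combination hxy - y ^ 2 * hpq
    refine ⟨⟨!![x / p, y; y * q / s, x / s], hdet⟩, ?_⟩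
    have key : (!![x / p, y; y * q / s, x / s] : Matrix (Fin 2) (Fin 2) K) * !![0, p; q, 0]
        = !![0, s; t, 0] * !![x / p, y; y * q / s, x / s] := by
      ext i j
      fin_cases i <;> fin_cases j <;>
        simp [Matrix.mul_apply, Fin.sum_univ_two] <;> field_simp <;>
        first
        | linear_combination x * hpq - x * hst
        | linear_combination y * hpq - y * hst
    calc (⟨!![x / p, y; y * q / s, x / s], hdet⟩ : Matrix.SpecialLinearGroup (Fin 2) K) *
          !![0, p; q, 0] * _ = !![0, s; t, 0] * ((⟨!![x / p, y; y * q / s, x / s], hdet⟩ :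
            Matrix.SpecialLinearGroup (Fin 2) K) : Matrix (Fin 2) (Fin 2) K) *
            (((⟨!![x / p, y; y * q / s, x / s], hdet⟩ :
              Matrix.SpecialLinearGroup (Fin 2) K)⁻¹ :
              Matrix.SpecialLinearGroup (Fin 2) K) : Matrix (Fin 2) (Fin 2) K) := by
          rw [show ((⟨!![x / p, y; y * q / s, x / s], hdet⟩ :
            Matrix.SpecialLinearGroup (Fin 2) K) : Matrix (Fin 2) (Fin 2) K) =
            !![x / p, y; y * q / s, x / s] from rfl, key]
      _ = !![0, s; t, 0] := by
          rw [Matrix.mul_assoc]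
          exact (congrArg (fun M => !![0, s; t, 0] * M) (congrArg Subtype.val
            (mul_inv_cancel (G := Matrix.SpecialLinearGroup (Fin 2) K)
              ⟨!![x / p, y; y * q / s, x / s], hdet⟩))).trans (Matrix.mul_one _)
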